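/- For every i ∈ {1,…,d}, every n ∈ ℕ_0 and every t ∈ ℝ_+^d, the multiparameter GCP distribution satisfies the system of differential equations ∂/∂t_i p(n,t) = −Σ_{j=1}^k λ_{ji} (p(n,t) − p(n−j,t)), where p(m,t) := 0 for m < 0, with initial conditions p(0,0) = 1 and p(n,0) = 0 for n ≥ 1. -/

import Mathlib

open scoped BigOperators

/-- The one-dimensional distribution of the multiparameter generalized counting process:
`p(n,t) = Σ_{x ∈ Ω(k,n)} ∏_{j=1}^k ((Λ_j·t)^{x_j}/x_j!) e^{−Λ_j·t}`, where
`Ω(k,n) = {x ∈ ℕ_0^k : Σ_j j·x_j = n}` (here `j = j.1 + 1` ranges over `1,…,k`). -/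
noncomputable def gterm (m : ℕ) (u : ℝ) : ℝ := u ^ m / m.factorial * Real.exp (-u)

/-- `gterm (m-1)` with `gterm (-1) := 0`. -/

noncomputable def gdown : ℕ → ℝ → ℝ
  | 0 => fun _ => 0
  | m + 1 => gterm m

lemma hasDerivAt_gterm (m : ℕ) (u : ℝ) :
    HasDerivAt (gterm m) (gdown m u - gterm m u) u := by
  cases m with
  | zero =>
      have h := ((Real.hasDerivAt_exp (-u)).comp u (hasDerivAt_neg u))
      simp only [mul_neg_one] at h
      have h' : HasDerivAt (gterm 0) (-Real.exp (-u)) u := by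
        have hg : gterm 0 = Real.exp ∘ Neg.neg := by funext v; simp [gterm]
        rw [hg]; exact h
      convert h' using 1
      simp [gdown, gterm]
  | succ m =>
      have h1 : HasDerivAt (fun u : ℝ => u ^ (m + 1) / (m + 1).factorial)
          (((m : ℝ) + 1) * u ^ m / (m + 1).factorial) u := by
        simpa [div_eq_mul_inv, mul_comm, mul_assoc, mul_left_comm] using
          ((hasDerivAt_pow (m + 1) u).div_const ((m + 1).factorial : ℝ))
      have h2 : HasDerivAt (fun u : ℝ => Real.exp (-u)) (-Real.exp (-u)) u := by
        have h := ((Real.hasDerivAt_exp (-u)).comp u (hasDerivAt_neg u))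
        simp only [mul_neg_one] at h
        exact h
      have h : HasDerivAt (gterm (m + 1)) _ u := h1.mul h2
      convert h using 1
      have hfac : ((m + 1).factorial : ℝ) = ((m : ℝ) + 1) * (m.factorial : ℝ) := by
        rw [Nat.factorial_succ]; push_cast; ring
      have hm : (m.factorial : ℝ) ≠ 0 := Nat.cast_ne_zero.2 m.factorial_ne_zero
      have hm1 : ((m : ℝ) + 1) ≠ 0 := by positivity
      simp only [gdown, gterm, hfac, pow_succ]
      field_simp
      ring

lemma gdown_eq {m : ℕ} (hm : 1 ≤ m) : gdown m = gterm (m - 1) := by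
  cases m with
  | zero => omega
  | succ m => rfl

lemma cond_mem_piFinset {k n : ℕ} {x : Fin k → ℕ} (h : (∑ j, (j.1 + 1) * x j) = n) :
    x ∈ Fintype.piFinset (fun _ : Fin k => Finset.range (n + 1)) := by
  rw [Fintype.mem_piFinset]
  intro j
  rw [Finset.mem_range, Nat.lt_succ_iff, ← h]
  calc x j ≤ (j.1 + 1) * x j := Nat.le_mul_of_pos_left _ (Nat.succ_pos _)
    _ ≤ ∑ j', (j'.1 + 1) * x j' :=
      Finset.single_le_sum (f := fun j' => (j'.1 + 1) * x j') (fun _ _ => Nat.zero_le _)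
        (Finset.mem_univ j)

lemma sum_split {k : ℕ} (j0 : Fin k) (z : Fin k → ℕ) :
    ∑ j, (j.1 + 1) * z j = (j0.1 + 1) * z j0 + ∑ j ∈ Finset.univ.erase j0, (j.1 + 1) * z j :=
  (Finset.add_sum_erase _ _ (Finset.mem_univ j0)).symm

lemma sum_down {k : ℕ} (u : Fin k → ℝ) (n : ℕ) (j0 : Fin k) :
    (∑ x ∈ Fintype.piFinset (fun _ : Fin k => Finset.range (n + 1)),
      (if (∑ j, (j.1 + 1) * x j) = n then
        gdown (x j0) (u j0) * ∏ j ∈ Finset.univ.erase j0, gterm (x j) (u j) else 0))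
    = if j0.1 + 1 ≤ n then
        (∑ y ∈ Fintype.piFinset (fun _ : Fin k => Finset.range (n - (j0.1 + 1) + 1)),
          (if (∑ j, (j.1 + 1) * y j) = n - (j0.1 + 1) then ∏ j, gterm (y j) (u j) else 0))
      else 0 := by
  classical
  have stepA :
      (∑ x ∈ Fintype.piFinset (fun _ : Fin k => Finset.range (n + 1)),
        (if (∑ j, (j.1 + 1) * x j) = n then
          gdown (x j0) (u j0) * ∏ j ∈ Finset.univ.erase j0, gterm (x j) (u j) else 0))
      = ∑ x ∈ Fintype.piFinset (fun _ : Fin k => Finset.range (n + 1)),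
        (if ((∑ j, (j.1 + 1) * x j) = n ∧ 1 ≤ x j0) then
          gterm (x j0 - 1) (u j0) * ∏ j ∈ Finset.univ.erase j0, gterm (x j) (u j) else 0) := by
    refine Finset.sum_congr rfl (fun x _ => ?_)
    by_cases hc : (∑ j, (j.1 + 1) * x j) = n
    · by_cases hx : 1 ≤ x j0
      · rw [if_pos hc, if_pos ⟨hc, hx⟩, gdown_eq hx]
      · have hx0 : x j0 = 0 := by omega
        rw [if_pos hc, if_neg (fun h => hx h.2), hx0]
        simp [gdown]
    · rw [if_neg hc, if_neg (fun h => hc h.1)]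
  rw [stepA]
  by_cases hn : j0.1 + 1 ≤ n
  · rw [if_pos hn, ← Finset.sum_filter, ← Finset.sum_filter]
    refine Finset.sum_nbij' (fun x => Function.update x j0 (x j0 - 1))
      (fun y => Function.update y j0 (y j0 + 1)) ?_ ?_ ?_ ?_ ?_
    · intro x hx
      rw [Finset.mem_filter] at hx
      obtain ⟨-, hc, hx1⟩ := hx
      have hcond : (∑ j, (j.1 + 1) * (Function.update x j0 (x j0 - 1)) j) = n - (j0.1 + 1) := by
        rw [sum_split j0]
        rw [sum_split j0] at hc
        have he : ∑ j ∈ Finset.univ.erase j0, (j.1 + 1) * (Function.update x j0 (x j0 - 1)) j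
            = ∑ j ∈ Finset.univ.erase j0, (j.1 + 1) * x j := by
          refine Finset.sum_congr rfl (fun j hj => ?_)
          rw [Function.update_of_ne (Finset.ne_of_mem_erase hj)]
        rw [he, Function.update_self]
        have hmul : (j0.1 + 1) * (x j0 - 1) = (j0.1 + 1) * x j0 - (j0.1 + 1) := by
          rw [Nat.mul_sub, mul_one]
        have hle : (j0.1 + 1) ≤ (j0.1 + 1) * x j0 := Nat.le_mul_of_pos_right _ hx1
        omega
      exact Finset.mem_filter.2 ⟨cond_mem_piFinset hcond, hcond⟩
    · intro y hy
      rw [Finset.mem_filter] at hy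
      obtain ⟨-, hc⟩ := hy
      have hcond : (∑ j, (j.1 + 1) * (Function.update y j0 (y j0 + 1)) j) = n := by
        rw [sum_split j0]
        rw [sum_split j0] at hc
        have he : ∑ j ∈ Finset.univ.erase j0, (j.1 + 1) * (Function.update y j0 (y j0 + 1)) j
            = ∑ j ∈ Finset.univ.erase j0, (j.1 + 1) * y j := by
          refine Finset.sum_congr rfl (fun j hj => ?_)
          rw [Function.update_of_ne (Finset.ne_of_mem_erase hj)]
        rw [he, Function.update_self, Nat.mul_add, mul_one]
        omega
      refine Finset.mem_filter.2 ⟨cond_mem_piFinset hcond, hcond, ?_⟩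
      simp only [Function.update_self]; omega
    · intro x hx
      rw [Finset.mem_filter] at hx
      obtain ⟨-, -, hx1⟩ := hx
      simp only [Function.update_self, Function.update_idem]
      rw [Nat.sub_add_cancel hx1, Function.update_eq_self]
    · intro y hy
      simp only [Function.update_self, Function.update_idem]
      rw [Nat.add_sub_cancel, Function.update_eq_self]
    · intro x hx
      rw [Finset.mem_filter] at hx
      obtain ⟨-, -, hx1⟩ := hx
      rw [← Finset.mul_prod_erase Finset.univ
        (fun j => gterm ((Function.update x j0 (x j0 - 1)) j) (u j)) (Finset.mem_univ j0)]
      rw [Function.update_self]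
      congr 1
      refine Finset.prod_congr rfl (fun j hj => ?_)
      rw [Function.update_of_ne (Finset.ne_of_mem_erase hj)]
  · rw [if_neg hn]
    refine Finset.sum_eq_zero (fun x _ => ?_)
    rw [if_neg]
    rintro ⟨hc, hx1⟩
    rw [sum_split j0] at hc
    have hle : (j0.1 + 1) ≤ (j0.1 + 1) * x j0 := Nat.le_mul_of_pos_right _ hx1
    omega

noncomputable def gcpPmf (d k : ℕ) (lam : Fin k → Fin d → ℝ) (n : ℕ) (t : Fin d → ℝ) : ℝ :=
  ∑' x : Fin k → ℕ,
    if (∑ j, (j.1 + 1) * x j) = n then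
      ∏ j, ((∑ i, lam j i * t i) ^ (x j) / (Nat.factorial (x j)) *
        Real.exp (-(∑ i, lam j i * t i)))
    else 0

/-- `p(m,t)` extended to integer arguments by `p(m,t) = 0` for `m < 0`. -/
noncomputable def gcpPmfZ (d k : ℕ) (lam : Fin k → Fin d → ℝ) (m : ℤ) (t : Fin d → ℝ) : ℝ :=
  if 0 ≤ m then gcpPmf d k lam m.toNat t else 0

/-- For every `i ∈ {1,…,d}`, every `n ∈ ℕ_0` and every `t ∈ ℝ_+^d`, the multiparameter GCP
distribution satisfies `∂/∂t_i p(n,t) = −Σ_{j=1}^k λ_{ji} (p(n,t) − p(n−j,t))`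
(with `p(m,t) := 0` for `m < 0`), together with the initial conditions `p(0,0) = 1` and
`p(n,0) = 0` for `n ≥ 1`. -/
lemma gcpPmf_eq_sum (d k : ℕ) (lam : Fin k → Fin d → ℝ) (n : ℕ) (t : Fin d → ℝ) :
    gcpPmf d k lam n t =
      ∑ x ∈ Fintype.piFinset (fun _ : Fin k => Finset.range (n + 1)),
        (if (∑ j, (j.1 + 1) * x j) = n then
          ∏ j, gterm (x j) (∑ i, lam j i * t i) else 0) := by
  unfold gcpPmf gterm
  exact tsum_eq_sum (fun x hx => if_neg (fun h => hx (cond_mem_piFinset h)))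

lemma gcpPmfZ_sub (d k : ℕ) (lam : Fin k → Fin d → ℝ) (n : ℕ) (j0 : Fin k) (t : Fin d → ℝ) :
    gcpPmfZ d k lam ((n : ℤ) - (j0.1 + 1)) t =
      if j0.1 + 1 ≤ n then gcpPmf d k lam (n - (j0.1 + 1)) t else 0 := by
  unfold gcpPmfZ
  by_cases h : j0.1 + 1 ≤ n
  · rw [if_pos h, if_pos (by omega)]
    congr 1
    omega
  · rw [if_neg h, if_neg (by omega)]

theorem gcpPmf_pde (d k : ℕ) (hd : 1 ≤ d) (hk : 1 ≤ k)
    (lam : Fin k → Fin d → ℝ) (hlam : ∀ j i, 0 < lam j i) :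
    (∀ (i : Fin d) (n : ℕ) (t : Fin d → ℝ), (∀ i', 0 ≤ t i') →
      HasDerivAt (fun s : ℝ => gcpPmf d k lam n (Function.update t i s))
        (-∑ j : Fin k, lam j i *
          (gcpPmf d k lam n t - gcpPmfZ d k lam ((n : ℤ) - (j.1 + 1)) t))
        (t i)) ∧
    gcpPmf d k lam 0 0 = 1 ∧
    (∀ n : ℕ, 1 ≤ n → gcpPmf d k lam n 0 = 0) := by
  classical
  refine ⟨?_, ?_, ?_⟩
  · -- the differential equation
    intro i n t ht
    set u : Fin k → ℝ := fun j => ∑ i', lam j i' * t i' with hu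
    set F := Fintype.piFinset (fun _ : Fin k => Finset.range (n + 1)) with hF
    -- derivative of the inner linear map
    have hL : ∀ j : Fin k,
        HasDerivAt (fun s : ℝ => ∑ i', lam j i' * Function.update t i s i') (lam j i) (t i) := by
      intro j
      have heq : (fun s : ℝ => ∑ i', lam j i' * Function.update t i s i')
          = fun s : ℝ => lam j i * s + ∑ i' ∈ Finset.univ.erase i, lam j i' * t i' := by
        funext s
        rw [← Finset.add_sum_erase Finset.univ
          (fun i' => lam j i' * Function.update t i s i') (Finset.mem_univ i)]
        simp only [Function.update_self]
        congr 1
        refine Finset.sum_congr rfl (fun i' hi' => ?_)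
        rw [Function.update_of_ne (Finset.ne_of_mem_erase hi')]
      rw [heq]
      simpa using (((hasDerivAt_id (t i)).const_mul (lam j i)).add_const
        (∑ i' ∈ Finset.univ.erase i, lam j i' * t i'))
    have hLval : ∀ j : Fin k, (∑ i', lam j i' * Function.update t i (t i) i') = u j := by
      intro j; rw [Function.update_eq_self]
    -- derivative of each product term
    have hprod : ∀ x : Fin k → ℕ,
        HasDerivAt (fun s : ℝ => ∏ j, gterm (x j) (∑ i', lam j i' * Function.update t i s i'))
          (∑ j0, (∏ j ∈ Finset.univ.erase j0, gterm (x j) (u j)) *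
            (lam j0 i * (gdown (x j0) (u j0) - gterm (x j0) (u j0)))) (t i) := by
      intro x
      have h : ∀ j0 : Fin k, j0 ∈ (Finset.univ : Finset (Fin k)) →
          HasDerivAt (fun s : ℝ => gterm (x j0) (∑ i', lam j0 i' * Function.update t i s i'))
            (lam j0 i * (gdown (x j0) (u j0) - gterm (x j0) (u j0))) (t i) := by
        intro j0 _
        have h2 := hL j0
        have h1 : HasDerivAt (gterm (x j0)) (gdown (x j0) (u j0) - gterm (x j0) (u j0))
            (∑ i', lam j0 i' * Function.update t i (t i) i') := by
          rw [hLval j0]; exact hasDerivAt_gterm _ _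
        have h3 := HasDerivAt.comp (t i) h1 h2
        exact h3.congr_deriv (mul_comm _ _)
      have := HasDerivAt.fun_finsetProd h
      simpa [smul_eq_mul] using this
    -- derivative of each ite term and the finite sum
    have Hsum : HasDerivAt
        (fun s : ℝ => ∑ x ∈ F, (if (∑ j, (j.1 + 1) * x j) = n then
          ∏ j, gterm (x j) (∑ i', lam j i' * Function.update t i s i') else 0))
        (∑ x ∈ F, (if (∑ j, (j.1 + 1) * x j) = n then
          ∑ j0, (∏ j ∈ Finset.univ.erase j0, gterm (x j) (u j)) *
            (lam j0 i * (gdown (x j0) (u j0) - gterm (x j0) (u j0))) else 0)) (t i) := by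
      refine HasDerivAt.fun_sum (fun x _ => ?_)
      by_cases hc : (∑ j, (j.1 + 1) * x j) = n
      · simp only [if_pos hc]; exact hprod x
      · simp only [if_neg hc]; exact hasDerivAt_const _ 0
    -- rewrite the function
    have hfun : (fun s : ℝ => gcpPmf d k lam n (Function.update t i s))
        = (fun s : ℝ => ∑ x ∈ F, (if (∑ j, (j.1 + 1) * x j) = n then
          ∏ j, gterm (x j) (∑ i', lam j i' * Function.update t i s i') else 0)) := by
      funext s
      exact gcpPmf_eq_sum d k lam n (Function.update t i s)
    rw [hfun]
    -- rewrite the derivative value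
    convert Hsum using 1
    have step1 : ∀ x : Fin k → ℕ,
        (if (∑ j, (j.1 + 1) * x j) = n then
          ∑ j0, (∏ j ∈ Finset.univ.erase j0, gterm (x j) (u j)) *
            (lam j0 i * (gdown (x j0) (u j0) - gterm (x j0) (u j0))) else 0)
        = ∑ j0 : Fin k, (lam j0 i *
            ((if (∑ j, (j.1 + 1) * x j) = n then
              gdown (x j0) (u j0) * ∏ j ∈ Finset.univ.erase j0, gterm (x j) (u j) else 0)
            - (if (∑ j, (j.1 + 1) * x j) = n then
              gterm (x j0) (u j0) * ∏ j ∈ Finset.univ.erase j0, gterm (x j) (u j) else 0))) := by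
      intro x
      by_cases hc : (∑ j, (j.1 + 1) * x j) = n
      · simp only [if_pos hc]
        exact Finset.sum_congr rfl (fun j0 _ => by ring)
      · simp only [if_neg hc]
        simp
    calc (-∑ j : Fin k, lam j i *
          (gcpPmf d k lam n t - gcpPmfZ d k lam ((n : ℤ) - (j.1 + 1)) t))
        = ∑ j0 : Fin k, lam j0 i *
          (gcpPmfZ d k lam ((n : ℤ) - (j0.1 + 1)) t - gcpPmf d k lam n t) := by
          rw [← Finset.sum_neg_distrib]
          exact Finset.sum_congr rfl (fun j0 _ => by ring)
      _ = ∑ j0 : Fin k, lam j0 i *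
          ((∑ x ∈ F, (if (∑ j, (j.1 + 1) * x j) = n then
              gdown (x j0) (u j0) * ∏ j ∈ Finset.univ.erase j0, gterm (x j) (u j) else 0))
          - (∑ x ∈ F, (if (∑ j, (j.1 + 1) * x j) = n then
              gterm (x j0) (u j0) * ∏ j ∈ Finset.univ.erase j0, gterm (x j) (u j) else 0))) := by
          refine Finset.sum_congr rfl (fun j0 _ => ?_)
          congr 1
          congr 1
          · rw [gcpPmfZ_sub, sum_down u n j0]
            by_cases h : j0.1 + 1 ≤ n
            · rw [if_pos h, if_pos h, gcpPmf_eq_sum]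
            · rw [if_neg h, if_neg h]
          · rw [gcpPmf_eq_sum]
            refine Finset.sum_congr rfl (fun x _ => ?_)
            by_cases hc : (∑ j, (j.1 + 1) * x j) = n
            · rw [if_pos hc, if_pos hc,
                Finset.mul_prod_erase Finset.univ (fun j => gterm (x j) (u j)) (Finset.mem_univ j0)]
            · rw [if_neg hc, if_neg hc]
      _ = ∑ j0 : Fin k, ∑ x ∈ F, (lam j0 i *
            ((if (∑ j, (j.1 + 1) * x j) = n then
              gdown (x j0) (u j0) * ∏ j ∈ Finset.univ.erase j0, gterm (x j) (u j) else 0)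
            - (if (∑ j, (j.1 + 1) * x j) = n then
              gterm (x j0) (u j0) * ∏ j ∈ Finset.univ.erase j0, gterm (x j) (u j) else 0))) := by
          refine Finset.sum_congr rfl (fun j0 _ => ?_)
          rw [← Finset.sum_sub_distrib, Finset.mul_sum]
      _ = ∑ x ∈ F, (if (∑ j, (j.1 + 1) * x j) = n then
          ∑ j0, (∏ j ∈ Finset.univ.erase j0, gterm (x j) (u j)) *
            (lam j0 i * (gdown (x j0) (u j0) - gterm (x j0) (u j0))) else 0) := by
          rw [Finset.sum_comm]
          exact Finset.sum_congr rfl (fun x _ => (step1 x).symm)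
  · -- p(0,0) = 1
    unfold gcpPmf
    rw [tsum_eq_single (0 : Fin k → ℕ)]
    · simp
    · intro x hx
      rw [if_neg]
      intro hc
      apply hx
      funext j
      have h2 := (Finset.sum_eq_zero_iff).1 hc j (Finset.mem_univ j)
      rcases Nat.mul_eq_zero.1 h2 with h | h
      · omega
      · simpa using h
  · -- p(n,0) = 0 for n ≥ 1
    intro n hn
    unfold gcpPmf
    have hz : ∀ x : Fin k → ℕ,
        (if (∑ j, (j.1 + 1) * x j) = n then
          ∏ j, ((∑ i, lam j i * (0 : Fin d → ℝ) i) ^ (x j) / (Nat.factorial (x j)) *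
            Real.exp (-(∑ i, lam j i * (0 : Fin d → ℝ) i))) else 0) = 0 := by
      intro x
      by_cases hc : (∑ j, (j.1 + 1) * x j) = n
      · rw [if_pos hc]
        have hex : ∃ j, x j ≠ 0 := by
          by_contra h
          push_neg at h
          simp only [h, mul_zero, Finset.sum_const_zero] at hc
          omega
        obtain ⟨j, hj⟩ := hex
        refine Finset.prod_eq_zero (Finset.mem_univ j) ?_
        simp [zero_pow hj]
      · rw [if_neg hc]
    rw [tsum_congr hz, tsum_zero]
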